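/- Soundness of amgu for Clique-Sharing, first case: let x be a variable, T a finite set of variables, cl a clique set and sh a sharing set. If no clique of cl contains x and no clique of cl intersects T, then amgu(x, T, ↓cl ∪ sh) = ↓cl ∪ amgu(x, T, sh). -/
import Mathlib


variable {V : Type*} [DecidableEq V]

/-- `℘⁰(C)`: the set of nonempty subsets of a finite set `C`. -/
def pow0 (C : Finset V) : Set (Finset V) := {u | u ⊆ C ∧ u ≠ ∅}

/-- Concretization of a clique set: `↓cl = ⋃_{C ∈ cl} ℘⁰(C)`. -/
def conc (cl : Set (Finset V)) : Set (Finset V) := ⋃ C ∈ cl, pow0 C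

/-- Binary union: `s₁ ⊎ s₂ = {a ∪ b : a ∈ s₁, b ∈ s₂}`. -/
def bin (s₁ s₂ : Set (Finset V)) : Set (Finset V) :=
  {u | ∃ a ∈ s₁, ∃ b ∈ s₂, u = a ∪ b}

/-- Star union: all unions `⋃ T` over finite nonempty subfamilies `T ⊆ s`. -/
def starU (s : Set (Finset V)) : Set (Finset V) :=
  {u | ∃ T : Finset (Finset V), T.Nonempty ∧ ↑T ⊆ s ∧ u = T.sup id}

/-- `s_G`: the part of `s` relevant to `G` (groups intersecting `G`). -/
def relG (G : Finset V) (s : Set (Finset V)) : Set (Finset V) :=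
  {u ∈ s | u ∩ G ≠ ∅}

/-- `rel̄(S, cl) = {C \ S : C ∈ cl} \ {∅}`. -/
def relbar (S : Finset V) (cl : Set (Finset V)) : Set (Finset V) :=
  {d | (∃ C ∈ cl, d = C \ S) ∧ d ≠ ∅}

/-- `project(G, s) = {u ∩ G : u ∈ s} \ {∅}`. -/
def sproject (G : Finset V) (s : Set (Finset V)) : Set (Finset V) :=
  {d | (∃ u ∈ s, d = u ∩ G) ∧ d ≠ ∅}

/-- Abstract unification of the Sharing domain for `x = t`, `T` the variables of `t`. -/
def amgu (x : V) (T : Finset V) (s : Set (Finset V)) : Set (Finset V) :=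
  (s \ relG ({x} ∪ T) s) ∪ bin (starU (relG {x} s)) (starU (relG T s))

/-- The `extend` function of the Sharing domain. -/
def extendSh (Call : Set (Finset V)) (G : Finset V) (Prime : Set (Finset V)) :
    Set (Finset V) :=
  {u ∈ Call | u ∩ G = ∅} ∪ {u ∈ starU (relG G Call) | u ∩ G ∈ Prime}

/-- Union of all groups of `s` containing `x`, as a set of variables. -/
def occSet (s : Set (Finset V)) (x : V) : Set V :=
  ⋃ u ∈ {u ∈ s | x ∈ u}, (↑u : Set V)

/-- amgu soundness, first case: cl_x = cl_t = ∅. -/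
theorem amgu_clique_case1 (x : V) (T : Finset V) (cl sh : Set (Finset V))
    (hx : ∀ C ∈ cl, x ∉ C) (hT : ∀ C ∈ cl, C ∩ T = ∅) :
    amgu x T (conc cl ∪ sh) = conc cl ∪ amgu x T sh := by

  have key : ∀ u ∈ conc cl, u ∩ ({x} ∪ T) = ∅ := by
    intro u hu
    simp only [conc, Set.mem_iUnion, pow0, Set.mem_setOf_eq] at hu
    obtain ⟨C, hC, hsub, -⟩ := hu
    apply Finset.eq_empty_iff_forall_notMem.2
    intro v hv
    rw [Finset.mem_inter, Finset.mem_union, Finset.mem_singleton] at hv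
    rcases hv.2 with h | h
    · exact hx C hC (h ▸ hsub hv.1)
    · exact Finset.eq_empty_iff_forall_notMem.1 (hT C hC) v
        (Finset.mem_inter.2 ⟨hsub hv.1, h⟩)
  have hrel : ∀ G : Finset V, G ⊆ {x} ∪ T → relG G (conc cl ∪ sh) = relG G sh := by
    intro G hG
    ext u
    simp only [relG, Set.mem_setOf_eq, Set.mem_union]
    constructor
    · rintro ⟨hu | hu, hne⟩
      · exfalso; apply hne
        have := key u hu
        apply Finset.eq_empty_iff_forall_notMem.2
        intro v hv
        rw [Finset.mem_inter] at hv
        exact Finset.eq_empty_iff_forall_notMem.1 this v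
          (Finset.mem_inter.2 ⟨hv.1, hG hv.2⟩)
      · exact ⟨hu, hne⟩
    · rintro ⟨hu, hne⟩; exact ⟨Or.inr hu, hne⟩
  have h1 : relG ({x} ∪ T) (conc cl ∪ sh) = relG ({x} ∪ T) sh := hrel _ (subset_refl _)
  have h2 : relG {x} (conc cl ∪ sh) = relG {x} sh := hrel _ Finset.subset_union_left
  have h3 : relG T (conc cl ∪ sh) = relG T sh := hrel _ Finset.subset_union_right
  have hdiff : conc cl \ relG ({x} ∪ T) sh = conc cl := by
    ext u
    simp only [Set.mem_diff, relG, Set.mem_setOf_eq, and_iff_left_iff_imp]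
    intro hu h
    exact h.2 (key u hu)
  unfold amgu
  rw [h1, h2, h3, Set.union_diff_distrib, hdiff, Set.union_assoc]
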